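/- arXiv:2508.03871 — 3 statements merged into one kernel-verified Lean document; each statement's English description precedes it below -/
import Mathlib

section
/- Let I ⊆ ℚ[a,b,c] be the ideal generated by a + c − 3b, a·c − 3b², and b³, and let J ⊆ ℚ[x,y] be the ideal generated by x² + x·y + y² and y³. Then the ℚ-algebra homomorphism ℚ[x,y] → ℚ[a,b,c]/I determined by x ↦ (class of a − b) and y ↦ (class of −b) vanishes on J and induces a ℚ-algebra isomorphism ℚ[x,y]/J ≅ ℚ[a,b,c]/I. -/
open MvPolynomial

/-- Variables: `a = X 0`, `b = X 1`, `c = X 2` in `ℚ[a,b,c]`. -/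
noncomputable def I₀ : Ideal (MvPolynomial (Fin 3) ℚ) :=
  Ideal.span {X 0 + X 2 - 3 * X 1, X 0 * X 2 - 3 * (X 1) ^ 2, (X 1) ^ 3}

/-- Variables: `x = X 0`, `y = X 1` in `ℚ[x,y]`. -/
noncomputable def J₀ : Ideal (MvPolynomial (Fin 2) ℚ) :=
  Ideal.span {(X 0) ^ 2 + X 0 * X 1 + (X 1) ^ 2, (X 1) ^ 3}

/-- The `ℚ`-algebra homomorphism `ℚ[x,y] → ℚ[a,b,c]/I₀` sending
`x ↦ class of a − b` and `y ↦ class of −b`. -/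
noncomputable def φ₀ : MvPolynomial (Fin 2) ℚ →ₐ[ℚ] MvPolynomial (Fin 3) ℚ ⧸ I₀ :=
  aeval ![Ideal.Quotient.mk I₀ (X 0 - X 1), Ideal.Quotient.mk I₀ (-X 1)]

noncomputable def σ₀ : MvPolynomial (Fin 2) ℚ →ₐ[ℚ] MvPolynomial (Fin 3) ℚ :=
  aeval ![X 0 - X 1, -X 1]

noncomputable def τ₀ : MvPolynomial (Fin 3) ℚ →ₐ[ℚ] MvPolynomial (Fin 2) ℚ :=
  aeval ![X 0 - X 1, -X 1, -X 0 - 2 * X 1]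

lemma φ₀_eq : φ₀ = (Ideal.Quotient.mkₐ ℚ I₀).comp σ₀ := by
  apply MvPolynomial.algHom_ext
  intro i
  fin_cases i <;> simp [φ₀, σ₀]

noncomputable def ψ₀ : MvPolynomial (Fin 3) ℚ →ₐ[ℚ] MvPolynomial (Fin 2) ℚ ⧸ J₀ :=
  (Ideal.Quotient.mkₐ ℚ J₀).comp τ₀

lemma g1mem : (X 0 + X 2 - 3 * X 1 : MvPolynomial (Fin 3) ℚ) ∈ I₀ :=
  Ideal.subset_span (by simp)
lemma g2mem : (X 0 * X 2 - 3 * (X 1) ^ 2 : MvPolynomial (Fin 3) ℚ) ∈ I₀ :=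
  Ideal.subset_span (by simp)
lemma g3mem : ((X 1 : MvPolynomial (Fin 3) ℚ)) ^ 3 ∈ I₀ :=
  Ideal.subset_span (by simp)
lemma j1mem : ((X 0 : MvPolynomial (Fin 2) ℚ)) ^ 2 + X 0 * X 1 + (X 1) ^ 2 ∈ J₀ :=
  Ideal.subset_span (by simp)
lemma j2mem : ((X 1 : MvPolynomial (Fin 2) ℚ)) ^ 3 ∈ J₀ :=
  Ideal.subset_span (by simp)

lemma hφ : ∀ p ∈ J₀, φ₀ p = 0 := by
  rw [φ₀_eq]
  intro p hp
  have : J₀ ≤ RingHom.ker ((Ideal.Quotient.mkₐ ℚ I₀).comp σ₀) := by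
    rw [J₀, Ideal.span_le]
    rintro q (rfl | rfl)
    · show Ideal.Quotient.mk I₀ (σ₀ _) = 0
      rw [Ideal.Quotient.eq_zero_iff_mem]
      have : σ₀ ((X 0) ^ 2 + X 0 * X 1 + (X 1) ^ 2) =
          X 0 * (X 0 + X 2 - 3 * X 1) - (X 0 * X 2 - 3 * (X 1) ^ 2) := by
        simp [σ₀, map_ofNat]; ring
      rw [this]
      exact sub_mem (Ideal.mul_mem_left _ _ g1mem) g2mem
    · show Ideal.Quotient.mk I₀ (σ₀ _) = 0
      rw [Ideal.Quotient.eq_zero_iff_mem]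
      have : σ₀ ((X 1) ^ 3) = -((X 1 : MvPolynomial (Fin 3) ℚ)) ^ 3 := by
        simp [σ₀, map_ofNat]; ring
      rw [this]
      exact neg_mem g3mem
  exact this hp

lemma hψ : ∀ p ∈ I₀, ψ₀ p = 0 := by
  intro p hp
  have : I₀ ≤ RingHom.ker ψ₀ := by
    rw [I₀, Ideal.span_le]
    rintro q (rfl | rfl | rfl)
    · show Ideal.Quotient.mk J₀ (τ₀ _) = 0
      rw [Ideal.Quotient.eq_zero_iff_mem]
      have : τ₀ (X 0 + X 2 - 3 * X 1) = 0 := by simp [τ₀, map_ofNat]; ring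
      rw [this]; exact Submodule.zero_mem _
    · show Ideal.Quotient.mk J₀ (τ₀ _) = 0
      rw [Ideal.Quotient.eq_zero_iff_mem]
      have : τ₀ (X 0 * X 2 - 3 * (X 1) ^ 2) =
          -(((X 0 : MvPolynomial (Fin 2) ℚ)) ^ 2 + X 0 * X 1 + (X 1) ^ 2) := by
        simp [τ₀, map_ofNat]; ring
      rw [this]; exact neg_mem j1mem
    · show Ideal.Quotient.mk J₀ (τ₀ _) = 0
      rw [Ideal.Quotient.eq_zero_iff_mem]
      have : τ₀ ((X 1) ^ 3) = -((X 1 : MvPolynomial (Fin 2) ℚ)) ^ 3 := by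
        simp [τ₀, map_ofNat]; ring
      rw [this]; exact neg_mem j2mem
  exact this hp

noncomputable def f₀ := Ideal.Quotient.liftₐ J₀ φ₀ hφ
noncomputable def g₀ := Ideal.Quotient.liftₐ I₀ ψ₀ hψ

lemma fmk (p : MvPolynomial (Fin 2) ℚ) :
    f₀ (Ideal.Quotient.mk J₀ p) = Ideal.Quotient.mk I₀ (σ₀ p) := by
  show Ideal.Quotient.liftₐ J₀ φ₀ hφ (Ideal.Quotient.mk J₀ p) = _
  show φ₀ p = _; rw [φ₀_eq]; rfl

lemma gmk (p : MvPolynomial (Fin 3) ℚ) :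
    g₀ (Ideal.Quotient.mk I₀ p) = Ideal.Quotient.mk J₀ (τ₀ p) := by
  show Ideal.Quotient.liftₐ I₀ ψ₀ hψ (Ideal.Quotient.mk I₀ p) = _
  show ψ₀ p = _; rfl

lemma hfg : f₀.comp g₀ = AlgHom.id ℚ _ := by
  apply Ideal.Quotient.algHom_ext
  apply MvPolynomial.algHom_ext
  intro i
  simp only [AlgHom.comp_apply, Ideal.Quotient.mkₐ_eq_mk, AlgHom.id_apply, gmk, fmk]
  rw [Ideal.Quotient.eq]
  fin_cases i
  · show σ₀ (τ₀ (X 0)) - X 0 ∈ I₀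
    have : σ₀ (τ₀ (X 0)) - X 0 = (0 : MvPolynomial (Fin 3) ℚ) := by
      simp [σ₀, τ₀, map_ofNat]
    rw [this]; exact Submodule.zero_mem _
  · show σ₀ (τ₀ (X 1)) - X 1 ∈ I₀
    have : σ₀ (τ₀ (X 1)) - X 1 = (0 : MvPolynomial (Fin 3) ℚ) := by
      simp [σ₀, τ₀, map_ofNat]
    rw [this]; exact Submodule.zero_mem _
  · show σ₀ (τ₀ (X 2)) - X 2 ∈ I₀
    have : σ₀ (τ₀ (X 2)) - X 2 = -(X 0 + X 2 - 3 * X 1 : MvPolynomial (Fin 3) ℚ) := by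
      simp [σ₀, τ₀, map_ofNat]; ring
    rw [this]; exact neg_mem g1mem

lemma hgf : g₀.comp f₀ = AlgHom.id ℚ _ := by
  apply Ideal.Quotient.algHom_ext
  apply MvPolynomial.algHom_ext
  intro i
  simp only [AlgHom.comp_apply, Ideal.Quotient.mkₐ_eq_mk, AlgHom.id_apply, gmk, fmk]
  rw [Ideal.Quotient.eq]
  fin_cases i
  · show τ₀ (σ₀ (X 0)) - X 0 ∈ J₀
    have : τ₀ (σ₀ (X 0)) - X 0 = (0 : MvPolynomial (Fin 2) ℚ) := by
      simp [σ₀, τ₀, map_ofNat]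
    rw [this]; exact Submodule.zero_mem _
  · show τ₀ (σ₀ (X 1)) - X 1 ∈ J₀
    have : τ₀ (σ₀ (X 1)) - X 1 = (0 : MvPolynomial (Fin 2) ℚ) := by
      simp [σ₀, τ₀, map_ofNat]
    rw [this]; exact Submodule.zero_mem _


theorem stmt0 :
    (∀ p ∈ J₀, φ₀ p = 0) ∧
    ∃ e : (MvPolynomial (Fin 2) ℚ ⧸ J₀) ≃ₐ[ℚ] (MvPolynomial (Fin 3) ℚ ⧸ I₀),
      ∀ p : MvPolynomial (Fin 2) ℚ, e (Ideal.Quotient.mk J₀ p) = φ₀ p := by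
  refine ⟨hφ, AlgEquiv.ofAlgHom f₀ g₀ hfg hgf, ?_⟩
  intro p
  show f₀ (Ideal.Quotient.mk J₀ p) = φ₀ p
  rw [fmk, φ₀_eq]; rfl
end

section
/- The triple (a + c − 3b, a·c − 3b², b³) is a regular sequence in the polynomial ring ℚ[a,b,c]. -/
open MvPolynomial

namespace Stmt4Aux

noncomputable abbrev R3 : Type := MvPolynomial (Fin 3) ℚ

noncomputable def f1 : R3 := (X 0 : R3) + X 2 - 3 * X 1
noncomputable def f2 : R3 := (X 0 : R3) * X 2 - 3 * (X 1) ^ 2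
noncomputable def f3 : R3 := ((X 1 : R3)) ^ 3

/-- substitution a ↦ 3b - c -/
noncomputable def σ : R3 →ₐ[ℚ] R3 := aeval ![3 * X 1 - X 2, X 1, X 2]
/-- substitution b ↦ 0 -/
noncomputable def τ : R3 →ₐ[ℚ] R3 := aeval ![X 0, 0, X 2]

lemma σ_X0 : σ (X 0) = 3 * X 1 - X 2 := by simp [σ]
lemma σ_X1 : σ (X 1) = X 1 := by simp [σ]
lemma σ_X2 : σ (X 2) = X 2 := by simp [σ]
lemma τ_X0 : τ (X 0) = X 0 := by simp [τ]
lemma τ_X1 : τ (X 1) = 0 := by simp [τ]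
lemma τ_X2 : τ (X 2) = X 2 := by simp [τ]

lemma congr_mod (φ : R3 →ₐ[ℚ] R3) (I : Ideal R3)
    (h : ∀ i, φ (X i) - X i ∈ I) (p : R3) : φ p - p ∈ I := by
  induction p using MvPolynomial.induction_on with
  | C a =>
      rw [← MvPolynomial.algebraMap_eq, AlgHom.commutes, sub_self]
      exact I.zero_mem
  | add p q hp hq =>
      have : φ (p + q) - (p + q) = (φ p - p) + (φ q - q) := by rw [map_add]; ring
      rw [this]; exact I.add_mem hp hq
  | mul_X p i hp =>
      have : φ (p * X i) - p * X i
          = φ p * (φ (X i) - X i) + X i * (φ p - p) := by rw [map_mul]; ring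
      rw [this]; exact I.add_mem (I.mul_mem_left _ (h i)) (I.mul_mem_left _ hp)

lemma σX : ∀ i, σ (X i) - X i ∈ Ideal.span {f1} := by
  intro i
  fin_cases i
  · rw [show ((⟨0, by norm_num⟩ : Fin 3)) = 0 from rfl, σ_X0]
    exact Ideal.mem_span_singleton.mpr ⟨-1, by rw [f1]; ring⟩
  · rw [show ((⟨1, by norm_num⟩ : Fin 3)) = 1 from rfl, σ_X1, sub_self]
    exact Ideal.zero_mem _
  · rw [show ((⟨2, by norm_num⟩ : Fin 3)) = 2 from rfl, σ_X2, sub_self]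
    exact Ideal.zero_mem _

lemma τX : ∀ i, τ (X i) - X i ∈ Ideal.span {(X 1 : R3)} := by
  intro i
  fin_cases i
  · rw [show ((⟨0, by norm_num⟩ : Fin 3)) = 0 from rfl, τ_X0, sub_self]
    exact Ideal.zero_mem _
  · rw [show ((⟨1, by norm_num⟩ : Fin 3)) = 1 from rfl, τ_X1, zero_sub]
    exact Ideal.mem_span_singleton.mpr ⟨-1, by ring⟩
  · rw [show ((⟨2, by norm_num⟩ : Fin 3)) = 2 from rfl, τ_X2, sub_self]
    exact Ideal.zero_mem _

lemma σ_f1 : σ f1 = 0 := by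
  rw [f1, map_sub, map_add, map_mul, σ_X0, σ_X1, σ_X2, map_ofNat]
  ring

noncomputable def g : R3 := σ f2

lemma g_eq : g = (3 * X 1 - X 2) * X 2 - 3 * (X 1) ^ 2 := by
  rw [g, f2, map_sub, map_mul, map_mul, map_pow, σ_X0, σ_X1, σ_X2, map_ofNat]

lemma g_ne : g ≠ 0 := by
  intro h
  have := congrArg (eval ![0, 0, 1]) h
  simp [g_eq] at this

lemma X1_ne : (X 1 : R3) ≠ 0 := by
  intro h
  have := congrArg (eval ![0, 1, 0]) h
  simp at this

lemma σ_zero_mem {p : R3} (h : σ p = 0) : p ∈ Ideal.span {f1} := by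
  have h2 := congr_mod σ _ σX p
  rw [h, zero_sub] at h2
  simpa using neg_mem h2

lemma τ_zero_dvd {p : R3} (h : τ p = 0) : (X 1 : R3) ∣ p := by
  have h2 := congr_mod τ _ τX p
  rw [h, zero_sub] at h2
  rw [← Ideal.mem_span_singleton]
  simpa using neg_mem h2

lemma τ_g : τ g = -(X 2) ^ 2 := by
  rw [g_eq, map_sub, map_mul, map_sub, map_mul, map_mul, map_pow, τ_X1, τ_X2,
    map_ofNat]
  ring

lemma descent : ∀ (n : ℕ) (w q : R3), (X 1 : R3) ^ n * w = q * g → ∃ s, w = s * g := by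
  intro n
  induction n with
  | zero => intro w q h; exact ⟨q, by simpa using h⟩
  | succ n ih =>
      intro w q h
      have ht := congrArg τ h
      rw [map_mul, map_mul, map_pow, τ_g, τ_X1,
        zero_pow (Nat.succ_ne_zero n), zero_mul] at ht
      have hτq : τ q = 0 := by
        have hne : (-(X 2 : R3) ^ 2) ≠ 0 := by
          intro h0
          have := congrArg (eval ![0, 0, 1]) h0
          simp at this
        exact (mul_eq_zero.mp ht.symm).resolve_right hne
      obtain ⟨q', hq'⟩ := τ_zero_dvd hτq
      apply ih w q'
      have hc : (X 1 : R3) * ((X 1 : R3) ^ n * w) = (X 1 : R3) * (q' * g) := by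
        rw [hq'] at h
        calc (X 1 : R3) * ((X 1 : R3) ^ n * w) = (X 1 : R3) ^ (n + 1) * w := by ring
        _ = X 1 * q' * g := h
        _ = (X 1 : R3) * (q' * g) := by ring
      exact mul_left_cancel₀ X1_ne hc

/-- helper: smul regularity on quotient from ideal condition -/
lemma smulreg_quot {A : Type*} [CommRing A] (I : Ideal A) (r : A)
    (h : ∀ p, r * p ∈ I → p ∈ I) :
    IsSMulRegular (A ⧸ (I • (⊤ : Submodule A A) : Submodule A A)) r := by
  have hIT : (I • (⊤ : Submodule A A) : Submodule A A) = I := by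
    rw [Ideal.smul_eq_mul, Ideal.mul_top]
  rw [hIT]
  intro x y hxy
  obtain ⟨p, rfl⟩ := Submodule.Quotient.mk_surjective _ x
  obtain ⟨q, rfl⟩ := Submodule.Quotient.mk_surjective _ y
  have hxy' : r • (Submodule.Quotient.mk p : A ⧸ I)
      = r • (Submodule.Quotient.mk q : A ⧸ I) := hxy
  rw [← Submodule.Quotient.mk_smul, ← Submodule.Quotient.mk_smul,
    Submodule.Quotient.eq] at hxy'
  rw [Submodule.Quotient.eq]
  refine h _ ?_
  rw [mul_sub]
  simpa [smul_eq_mul] using hxy'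

end Stmt4Aux

open Stmt4Aux in
/-- Variables: `a = X 0`, `b = X 1`, `c = X 2` in `ℚ[a,b,c]`: the triple
`(a + c − 3b, a·c − 3b², b³)` is a regular sequence. -/
theorem stmt4 :
    RingTheory.Sequence.IsRegular (MvPolynomial (Fin 3) ℚ)
      [(X 0 : MvPolynomial (Fin 3) ℚ) + X 2 - 3 * X 1,
        X 0 * X 2 - 3 * (X 1) ^ 2, (X 1) ^ 3] := by
  rw [RingTheory.Sequence.isRegular_iff]
  constructor
  · rw [RingTheory.Sequence.isWeaklyRegular_iff]
    intro i hi
    simp only [List.length_cons, List.length_nil] at hi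
    interval_cases i
    · -- f1 regular on R
      simp only [List.take_zero, List.getElem_cons_zero]
      apply smulreg_quot
      intro p hp
      rw [Ideal.ofList_nil, Ideal.mem_bot] at hp ⊢
      have hf1 : f1 ≠ 0 := by
        intro h
        have := congrArg (eval ![1, 0, 0]) h
        simp [f1] at this
      have hp' : f1 * p = 0 := hp
      exact (mul_eq_zero.mp hp').resolve_left hf1
    · -- f2 regular on R/(f1)
      have htake : ([(X 0 : MvPolynomial (Fin 3) ℚ) + X 2 - 3 * X 1,
          X 0 * X 2 - 3 * (X 1) ^ 2, (X 1) ^ 3].take 1) = [f1] := by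
        simp [f1]
      rw [htake, show Ideal.ofList [f1] = Ideal.span {f1} by
        rw [Ideal.ofList_cons, Ideal.ofList_nil, sup_bot_eq]]
      simp only [List.getElem_cons_succ, List.getElem_cons_zero]
      apply smulreg_quot
      intro p hp
      show p ∈ Ideal.span {f1}
      have hp' : f2 * p ∈ Ideal.span {f1} := hp
      obtain ⟨q, hq⟩ := Ideal.mem_span_singleton.mp hp'
      have hσ : σ f2 * σ p = σ f1 * σ q := by
        rw [← map_mul, ← map_mul, hq]
      rw [σ_f1, zero_mul] at hσ
      have hσp : σ p = 0 := (mul_eq_zero.mp hσ).resolve_left g_ne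
      exact σ_zero_mem hσp
    · -- f3 regular on R/(f1, f2)
      have htake : ([(X 0 : MvPolynomial (Fin 3) ℚ) + X 2 - 3 * X 1,
          X 0 * X 2 - 3 * (X 1) ^ 2, (X 1) ^ 3].take 2) = [f1, f2] := by
        simp [f1, f2]
      rw [htake, show Ideal.ofList [f1, f2] = Ideal.span {f1} ⊔ Ideal.span {f2} by
        rw [Ideal.ofList_cons, Ideal.ofList_cons, Ideal.ofList_nil, sup_bot_eq]]
      simp only [List.getElem_cons_succ, List.getElem_cons_zero]
      apply smulreg_quot
      intro p hp
      have hp' : f3 * p ∈ Ideal.span {f1} ⊔ Ideal.span {f2} := hp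
      rw [Submodule.mem_sup] at hp'
      obtain ⟨y, hy, z, hz, hyz⟩ := hp'
      obtain ⟨u, rfl⟩ := Ideal.mem_span_singleton.mp hy
      obtain ⟨v, rfl⟩ := Ideal.mem_span_singleton.mp hz
      have key : (X 1 : R3) ^ 3 * σ p = (σ v) * g := by
        have hcg := congrArg σ hyz.symm
        rw [map_mul, map_add, map_mul, map_mul, σ_f1, zero_mul, zero_add] at hcg
        have hσX1 : σ (f3) = (X 1 : R3) ^ 3 := by rw [f3, map_pow, σ_X1]
        rw [hσX1] at hcg
        rw [hcg, g]
        ring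
      obtain ⟨s, hs⟩ := descent 3 (σ p) (σ v) key
      have h1 : p - σ p ∈ Ideal.span {f1} ⊔ Ideal.span {f2} := by
        have := congr_mod σ _ σX p
        exact le_sup_left (α := Ideal R3) (by simpa using neg_mem this)
      have hg : g - f2 ∈ Ideal.span {f1} := by
        simpa [g] using congr_mod σ _ σX f2
      have h2 : σ p ∈ Ideal.span {f1} ⊔ Ideal.span {f2} := by
        rw [hs, show s * g = s * (g - f2) + s * f2 by ring]
        exact Submodule.add_mem _
          (le_sup_left (α := Ideal R3) (Ideal.mul_mem_left _ _ hg))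
          (le_sup_right (α := Ideal R3)
            (Ideal.mem_span_singleton.mpr ⟨s, mul_comm s f2⟩))
      have hps : p = (p - σ p) + σ p := by ring
      rw [hps]
      exact Submodule.add_mem _ h1 h2
  · -- quotient nonzero
    intro h
    have h1 : (1 : R3) ∈ (Ideal.ofList
        [(X 0 : MvPolynomial (Fin 3) ℚ) + X 2 - 3 * X 1,
          X 0 * X 2 - 3 * (X 1) ^ 2, (X 1) ^ 3] •
        (⊤ : Submodule R3 R3) : Submodule R3 R3) := by
      rw [← h]; trivial
    rw [Ideal.smul_eq_mul, Ideal.mul_top] at h1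
    have hle : Ideal.ofList
        [(X 0 : MvPolynomial (Fin 3) ℚ) + X 2 - 3 * X 1,
          X 0 * X 2 - 3 * (X 1) ^ 2, (X 1) ^ 3]
        ≤ RingHom.ker (eval (fun _ => (0 : ℚ))) := by
      simp only [Ideal.ofList_cons, Ideal.ofList_nil, sup_bot_eq, sup_le_iff]
      refine ⟨?_, ?_, ?_⟩ <;>
        · rw [Ideal.span_singleton_le_iff_mem, RingHom.mem_ker]; simp
    have h2 := hle h1
    rw [RingHom.mem_ker] at h2
    simp at h2
end

section
/- Fix a rational number β₃ and a sequence of rational numbers (γ_k)_{k≥2}, and define polynomials B_k ∈ ℚ[b,c] recursively by B₁ = b and B_k = (b − β₃·c)·B_{k−1} + γ_k·c^k for k ≥ 2. Then for every natural number n ≥ 1, the quotient ring ℚ[b,c]/(B_n, c^{n+1}) is a finite-dimensional ℚ-vector space of dimension n·(n+1). -/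
open Polynomial

private lemma stmt12_monic (β₃ : ℚ) (γ : ℕ → ℚ) (B : ℕ → Polynomial (Polynomial ℚ))
    (hB1 : B 1 = X)
    (hBk : ∀ k, 2 ≤ k →
      B k = (X - C (Polynomial.C β₃ * Polynomial.X)) * B (k - 1) +
        C (Polynomial.C (γ k) * Polynomial.X ^ k)) :
    ∀ n, 1 ≤ n → (B n).Monic ∧ (B n).natDegree = n := by
  intro n hn
  induction n with
  | zero => omega
  | succ m ih =>
    rcases Nat.eq_zero_or_pos m with hm | hm
    · subst hm
      rw [hB1]
      exact ⟨monic_X, natDegree_X⟩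
    · obtain ⟨hmon, hdeg⟩ := ih hm
      have h2 : 2 ≤ m + 1 := by omega
      have hE := hBk (m + 1) h2
      simp only [Nat.add_sub_cancel] at hE
      have hpm : ((X - C (Polynomial.C β₃ * Polynomial.X)) * B m).Monic :=
        (monic_X_sub_C _).mul hmon
      have hpd : ((X - C (Polynomial.C β₃ * Polynomial.X)) * B m).natDegree = m + 1 := by
        rw [(monic_X_sub_C _).natDegree_mul hmon, natDegree_X_sub_C, add_comm, hdeg]
      have hlt : (C (Polynomial.C (γ (m + 1)) * Polynomial.X ^ (m + 1)) :
          Polynomial (Polynomial ℚ)).degree <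
          ((X - C (Polynomial.C β₃ * Polynomial.X)) * B m).degree := by
        refine lt_of_le_of_lt degree_C_le ?_
        rw [degree_eq_natDegree hpm.ne_zero, hpd]
        exact_mod_cast Nat.succ_pos m
      constructor
      · rw [hE]; exact hpm.add_of_left hlt
      · rw [hE, natDegree_add_eq_left_of_degree_lt hlt, hpd]

/-- We realize `ℚ[b,c]` as `(ℚ[c])[b]`, i.e. `Polynomial (Polynomial ℚ)`,
with `b = X` and `c = C X`.  With `B k` defined recursively by `B 1 = b` and
`B k = (b − β₃·c)·B (k−1) + γ k·c^k` for `k ≥ 2`, the quotient ring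
`ℚ[b,c]/(B n, c^(n+1))` is an `n·(n+1)`-dimensional `ℚ`-vector space for
every `n ≥ 1`. -/
theorem stmt12 (β₃ : ℚ) (γ : ℕ → ℚ) (B : ℕ → Polynomial (Polynomial ℚ))
    (hB1 : B 1 = X)
    (hBk : ∀ k, 2 ≤ k →
      B k = (X - C (Polynomial.C β₃ * Polynomial.X)) * B (k - 1) +
        C (Polynomial.C (γ k) * Polynomial.X ^ k)) :
    ∀ n, 1 ≤ n →
      FiniteDimensional ℚ (Polynomial (Polynomial ℚ) ⧸
        Ideal.span {B n, (C Polynomial.X : Polynomial (Polynomial ℚ)) ^ (n + 1)}) ∧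
      Module.finrank ℚ (Polynomial (Polynomial ℚ) ⧸
        Ideal.span {B n, (C Polynomial.X : Polynomial (Polynomial ℚ)) ^ (n + 1)})
        = n * (n + 1) := by
  intro n hn
  obtain ⟨hmon, hdeg⟩ := stmt12_monic β₃ γ B hB1 hBk n hn
  set g : Polynomial ℚ := Polynomial.X ^ (n + 1) with hgdef
  have hgmon : g.Monic := monic_X_pow _
  -- the big ideal splits as a sup
  have hspan : Ideal.span {B n, (C Polynomial.X : Polynomial (Polynomial ℚ)) ^ (n + 1)} =
      Ideal.map (C : Polynomial ℚ →+* Polynomial (Polynomial ℚ)) (Ideal.span {g}) ⊔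
        Ideal.span {B n} := by
    rw [Ideal.map_span, Set.image_singleton, Ideal.span_insert, ← map_pow, sup_comm]
  set I : Ideal (Polynomial (Polynomial ℚ)) :=
    Ideal.map (C : Polynomial ℚ →+* Polynomial (Polynomial ℚ)) (Ideal.span {g}) with hI
  -- R = ℚ[c]/(c^{n+1})
  haveI : Nontrivial (AdjoinRoot g) := AdjoinRoot.nontrivial (f := g)
    (by rw [hgdef, degree_X_pow]; exact_mod_cast n.succ_ne_zero)
  let π : Polynomial ℚ →+* AdjoinRoot g := AdjoinRoot.mk g
  let f : Polynomial (AdjoinRoot g) := (B n).map π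
  have hfmon : f.Monic := hmon.map π
  have hfdeg : f.natDegree = n := by
    rw [show f = (B n).map π from rfl, hmon.natDegree_map, hdeg]
  -- the ring equivalence with AdjoinRoot f
  let ψ : (Polynomial (Polynomial ℚ) ⧸ I) ≃+* Polynomial (AdjoinRoot g) :=
    (Ideal.polynomialQuotientEquivQuotientPolynomial (Ideal.span {g})).symm
  have hmapJ : Ideal.span {f} =
      Ideal.map (ψ : (Polynomial (Polynomial ℚ) ⧸ I) →+* Polynomial (AdjoinRoot g))
        (Ideal.map (Ideal.Quotient.mk I) (Ideal.span {B n})) := by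
    rw [Ideal.map_span, Set.image_singleton, Ideal.map_span, Set.image_singleton]
    congr 1
  let e : (Polynomial (Polynomial ℚ) ⧸
      Ideal.span {B n, (C Polynomial.X : Polynomial (Polynomial ℚ)) ^ (n + 1)}) ≃+*
      AdjoinRoot f :=
    (Ideal.quotEquivOfEq hspan).trans
      (((DoubleQuot.quotQuotEquivQuotSup I (Ideal.span {B n})).symm).trans
        (Ideal.quotientEquiv _ (Ideal.span {f}) ψ hmapJ))
  -- upgrade to a ℚ-algebra equivalence
  let eA : (Polynomial (Polynomial ℚ) ⧸
      Ideal.span {B n, (C Polynomial.X : Polynomial (Polynomial ℚ)) ^ (n + 1)}) ≃ₐ[ℚ]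
      AdjoinRoot f :=
    AlgEquiv.ofRingEquiv (f := e) (fun q => by
      exact RingHom.congr_fun
        (Subsingleton.elim (e.toRingHom.comp (algebraMap ℚ _))
          (algebraMap ℚ (AdjoinRoot f))) q)
  -- bases
  let pbR : PowerBasis ℚ (AdjoinRoot g) := AdjoinRoot.powerBasis' hgmon
  let pbS : PowerBasis (AdjoinRoot g) (AdjoinRoot f) := AdjoinRoot.powerBasis' hfmon
  haveI : IsScalarTower ℚ (AdjoinRoot g) (AdjoinRoot f) :=
    IsScalarTower.of_algebraMap_eq'
      (Subsingleton.elim (algebraMap ℚ (AdjoinRoot f))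
        ((algebraMap (AdjoinRoot g) (AdjoinRoot f)).comp (algebraMap ℚ (AdjoinRoot g))))
  let bT : Module.Basis (Fin pbR.dim × Fin pbS.dim) ℚ (AdjoinRoot f) :=
    pbR.basis.smulTower pbS.basis
  haveI hFD : FiniteDimensional ℚ (AdjoinRoot f) := Module.Basis.finiteDimensional_of_finite bT
  have hdim : Module.finrank ℚ (AdjoinRoot f) = n * (n + 1) := by
    rw [Module.finrank_eq_card_basis bT, Fintype.card_prod, Fintype.card_fin, Fintype.card_fin]
    have h1 : pbR.dim = n + 1 := by
      simp [pbR, hgdef]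
    have h2 : pbS.dim = n := by
      simp only [pbS, AdjoinRoot.powerBasis'_dim]
      exact hfdeg
    rw [h1, h2, mul_comm]
  exact ⟨eA.symm.toLinearEquiv.finiteDimensional,
    by rw [eA.toLinearEquiv.finrank_eq, hdim]⟩
end
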